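/- Suppose C₁ is a strongly cancellative antichain in D_l^{k₁} (product of k₁ chains of length l−1). Then for any k with s = ⌊k/k₁⌋, the set of vectors v ∈ D_l^k whose j-th block of k₁ consecutive coordinates lies in C₁ for each 1 ≤ j ≤ s, and whose remaining k − s·k₁ coordinates are all 0, is a strongly cancellative set of size |C₁|^s in D_l^k. -/
import Mathlib

open Finset

/-- `C` is a strongly cancellative set in the lattice `α`. -/
def IsStronglyCancellative {α : Type*} [Lattice α] (C : Finset α) : Prop :=
  ∀ a1 ∈ C, ∀ a2 ∈ C, ∀ a3 ∈ C, a1 ≠ a2 → a1 ≠ a3 → a2 ≠ a3 →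
    a1 ⊓ a2 ≠ a1 ⊓ a3 ∧ a1 ⊔ a2 ≠ a1 ⊔ a3

def encodeBlocks {l k₁ k s : ℕ} (hl : 0 < l) (hk₁ : 0 < k₁)
    (b : Fin s → Fin k₁ → Fin l) : Fin k → Fin l :=
  fun i => if h : (i : ℕ) < s * k₁ then
    b ⟨(i : ℕ) / k₁, by rw [Nat.div_lt_iff_lt_mul hk₁]; exact h⟩
      ⟨(i : ℕ) % k₁, Nat.mod_lt _ hk₁⟩
  else ⟨0, hl⟩

lemma block_idx_lt {k₁ k s : ℕ} (hsk : s * k₁ ≤ k) (j : Fin s) (i : Fin k₁) :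
    (j : ℕ) * k₁ + (i : ℕ) < k := by
  have h1 : (j : ℕ) * k₁ + (i : ℕ) < ((j : ℕ) + 1) * k₁ := by
    have := i.isLt; nlinarith
  have h2 : ((j : ℕ) + 1) * k₁ ≤ s * k₁ := Nat.mul_le_mul_right _ j.isLt
  omega

lemma block_idx_lt' {k₁ s : ℕ} (j : Fin s) (i : Fin k₁) :
    (j : ℕ) * k₁ + (i : ℕ) < s * k₁ := block_idx_lt le_rfl j i

lemma encodeBlocks_apply {l k₁ k s : ℕ} (hl : 0 < l) (hk₁ : 0 < k₁)
    (b : Fin s → Fin k₁ → Fin l) (j : Fin s) (i : Fin k₁)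
    (h : (j : ℕ) * k₁ + (i : ℕ) < k) :
    encodeBlocks (k := k) hl hk₁ b ⟨(j : ℕ) * k₁ + (i : ℕ), h⟩ = b j i := by
  have hlt : (j : ℕ) * k₁ + (i : ℕ) < s * k₁ := block_idx_lt' j i
  have hd : ((j : ℕ) * k₁ + (i : ℕ)) / k₁ = j := by
    rw [Nat.add_comm, Nat.add_mul_div_right _ _ hk₁, Nat.div_eq_of_lt i.isLt, Nat.zero_add]
  have hm : ((j : ℕ) * k₁ + (i : ℕ)) % k₁ = i := by
    rw [Nat.add_comm, Nat.add_mul_mod_self_right, Nat.mod_eq_of_lt i.isLt]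
  simp only [encodeBlocks, dif_pos hlt]
  exact congr (congrArg b (Fin.ext hd)) (Fin.ext hm)

lemma encodeBlocks_injective {l k₁ k s : ℕ} (hl : 0 < l) (hk₁ : 0 < k₁)
    (hsk : s * k₁ ≤ k) :
    Function.Injective (encodeBlocks (l := l) (k₁ := k₁) (k := k) (s := s) hl hk₁) := by
  intro b1 b2 h
  funext j i
  have hlt := block_idx_lt hsk j i
  have := congrFun h ⟨(j : ℕ) * k₁ + (i : ℕ), hlt⟩
  rwa [encodeBlocks_apply, encodeBlocks_apply] at this

theorem blockwise_strongly_cancellative {l k₁ : ℕ} (hl : 0 < l) (hk₁ : 0 < k₁)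
    (C₁ : Finset (Fin k₁ → Fin l)) (hC₁ : IsStronglyCancellative C₁)
    (hanti : ∀ a ∈ C₁, ∀ b ∈ C₁, a ≠ b → ¬ a ≤ b) (k : ℕ) :
    let s := k / k₁
    ∃ C : Finset (Fin k → Fin l),
      (∀ v : Fin k → Fin l, v ∈ C ↔
        ((∀ j : Fin s, ∃ b ∈ C₁, ∀ i : Fin k₁,
            ∀ h : (j : ℕ) * k₁ + (i : ℕ) < k, v ⟨(j : ℕ) * k₁ + (i : ℕ), h⟩ = b i) ∧
         (∀ i : Fin k, s * k₁ ≤ (i : ℕ) → v i = ⟨0, hl⟩))) ∧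
      IsStronglyCancellative C ∧ C.card = C₁.card ^ s := by
  intro s
  have hsk : s * k₁ ≤ k := Nat.div_mul_le_self k k₁
  refine ⟨(Fintype.piFinset (fun _ : Fin s => C₁)).image (encodeBlocks hl hk₁), ?_, ?_, ?_⟩
  · intro v
    constructor
    · intro hv
      obtain ⟨b, hb, rfl⟩ := mem_image.mp hv
      rw [Fintype.mem_piFinset] at hb
      refine ⟨fun j => ⟨b j, hb j, fun i h => encodeBlocks_apply hl hk₁ b j i h⟩, ?_⟩
      intro i hi
      simp only [encodeBlocks, dif_neg (Nat.not_lt.mpr hi)]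
    · rintro ⟨h1, h2⟩
      choose bf hbm hbe using h1
      refine mem_image.mpr ⟨bf, Fintype.mem_piFinset.mpr hbm, ?_⟩
      funext i
      by_cases hi : (i : ℕ) < s * k₁
      · have hj : (i : ℕ) / k₁ < s := by rw [Nat.div_lt_iff_lt_mul hk₁]; exact hi
        have hm : (i : ℕ) % k₁ < k₁ := Nat.mod_lt _ hk₁
        have hidx : ((i : ℕ) / k₁) * k₁ + (i : ℕ) % k₁ = (i : ℕ) := by
          rw [Nat.mul_comm]; exact Nat.div_add_mod _ _
        have h' : ((i : ℕ) / k₁) * k₁ + (i : ℕ) % k₁ < k := by rw [hidx]; exact i.isLt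
        have hfin : (⟨((i : ℕ) / k₁) * k₁ + (i : ℕ) % k₁, h'⟩ : Fin k) = i := Fin.ext hidx
        rw [← hfin]
        rw [encodeBlocks_apply hl hk₁ bf ⟨_, hj⟩ ⟨_, hm⟩ h']
        exact (hbe ⟨_, hj⟩ ⟨_, hm⟩ h').symm
      · simp only [encodeBlocks, dif_neg hi]
        exact (h2 i (Nat.le_of_not_lt hi)).symm
  · intro v1 h1 v2 h2 v3 h3 h12 h13 h23
    obtain ⟨b1, hb1, rfl⟩ := mem_image.mp h1
    obtain ⟨b2, hb2, rfl⟩ := mem_image.mp h2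
    obtain ⟨b3, hb3, rfl⟩ := mem_image.mp h3
    rw [Fintype.mem_piFinset] at hb1 hb2 hb3
    have hb23 : b2 ≠ b3 := fun e => h23 (by rw [e])
    obtain ⟨j, hj⟩ : ∃ j, b2 j ≠ b3 j := by
      by_contra hc; push_neg at hc; exact hb23 (funext hc)
    constructor
    · intro heq
      have keyf : b1 j ⊓ b2 j = b1 j ⊓ b3 j := by
        funext i
        have hlt := block_idx_lt hsk j i
        have := congrFun heq ⟨(j : ℕ) * k₁ + (i : ℕ), hlt⟩
        simp only [Pi.inf_apply, encodeBlocks_apply hl hk₁] at this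
        simpa using this
      by_cases e2 : b1 j = b2 j
      · have : b2 j ≤ b3 j := by
          rw [e2, inf_idem] at keyf
          exact keyf.le.trans inf_le_right
        exact hanti _ (hb2 j) _ (hb3 j) hj this
      · by_cases e3 : b1 j = b3 j
        · have : b3 j ≤ b2 j := by
            rw [e3, inf_idem] at keyf
            exact keyf.ge.trans inf_le_right
          exact hanti _ (hb3 j) _ (hb2 j) (Ne.symm hj) this
        · exact (hC₁ _ (hb1 j) _ (hb2 j) _ (hb3 j) e2 e3 hj).1 keyf
    · intro heq
      have keyf : b1 j ⊔ b2 j = b1 j ⊔ b3 j := by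
        funext i
        have hlt := block_idx_lt hsk j i
        have := congrFun heq ⟨(j : ℕ) * k₁ + (i : ℕ), hlt⟩
        simp only [Pi.sup_apply, encodeBlocks_apply hl hk₁] at this
        simpa using this
      by_cases e2 : b1 j = b2 j
      · have : b3 j ≤ b2 j := by
          rw [e2, sup_idem] at keyf
          exact le_sup_right.trans keyf.ge
        exact hanti _ (hb3 j) _ (hb2 j) (Ne.symm hj) this
      · by_cases e3 : b1 j = b3 j
        · have : b2 j ≤ b3 j := by
            rw [e3, sup_idem] at keyf
            exact le_sup_right.trans keyf.le
          exact hanti _ (hb2 j) _ (hb3 j) hj this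
        · exact (hC₁ _ (hb1 j) _ (hb2 j) _ (hb3 j) e2 e3 hj).2 keyf
  · rw [card_image_of_injective _ (encodeBlocks_injective hl hk₁ hsk)]
    simp [Fintype.card_piFinset]
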